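/- For n ≥ 3, every eigenvalue of the image of the elementary matrix E_{1,2} under any finite-dimensional complex representation of SL_n(ℤ) is a root of unity. -/

import Mathlib

open Matrix

/-- The elementary matrix `E = E_{1,2}` (identity plus a `1` in position `(1,2)`)
as an element of `SL_{n+3}(R)`. -/
def Emat (n : ℕ) (R : Type*) [CommRing R] :
    Matrix.SpecialLinearGroup (Fin (n + 3)) R :=
  ⟨Matrix.transvection 0 1 1, by exact Matrix.det_transvection_of_ne 0 1 zero_ne_one 1⟩

/- ### Auxiliary lemmas -/

/-- In a finite-dimensional commutative algebra over `ℂ`, any non-unit of the form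
`b - μ` gives rise to a character `φ` with `φ b = μ`. -/
lemma exists_char {R : Type*} [CommRing R] [Algebra ℂ R] [FiniteDimensional ℂ R]
    (b : R) (μ : ℂ) (hb : ¬ IsUnit (b - algebraMap ℂ R μ)) :
    ∃ φ : R →ₐ[ℂ] ℂ, φ b = μ := by
  obtain ⟨I, hImax, hle⟩ := Ideal.exists_le_maximal _ (Ideal.span_singleton_ne_top hb)
  letI := Ideal.Quotient.field I
  haveI : FiniteDimensional ℂ (R ⧸ I) := Module.Finite.quotient ℂ I
  haveI : Algebra.IsAlgebraic ℂ (R ⧸ I) := Algebra.IsAlgebraic.of_finite ℂ _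
  haveI : NoZeroSMulDivisors ℂ (R ⧸ I) :=
    inferInstance
  let φ0 : (R ⧸ I) →ₐ[ℂ] ℂ := IsAlgClosed.lift
  refine ⟨φ0.comp (Ideal.Quotient.mkₐ ℂ I), ?_⟩
  have hmem : b - algebraMap ℂ R μ ∈ I := hle (Ideal.subset_span rfl)
  have h0 : (Ideal.Quotient.mkₐ ℂ I) (b - algebraMap ℂ R μ) = 0 :=
    Ideal.Quotient.eq_zero_iff_mem.mpr hmem
  rw [map_sub, AlgHom.commutes] at h0
  have : φ0 ((Ideal.Quotient.mkₐ ℂ I) b - algebraMap ℂ _ μ) = 0 := by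
    rw [h0, map_zero]
  rw [map_sub, AlgHom.commutes, sub_eq_zero] at this
  simpa using this

/-- Key spectral lemma: if `A` and `B` are commuting invertible complex matrices such that
`A * B ^ k` has the same spectrum as `A` for every `k`, then every element of the
spectrum of `B` is a root of unity. -/
lemma key_spectral {N : ℕ} (A B : Matrix (Fin N) (Fin N) ℂ) (hA : IsUnit A) (hB : IsUnit B)
    (hcomm : A * B = B * A) (μ : ℂ) (hμ : μ ∈ spectrum ℂ B)
    (hspec : ∀ k : ℕ, spectrum ℂ (A * B ^ k) = spectrum ℂ A) :
    ∃ m : ℕ, 0 < m ∧ μ ^ m = 1 := by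
  classical
  have hc : ∀ x ∈ ({A, B} : Set (Matrix (Fin N) (Fin N) ℂ)),
      ∀ y ∈ ({A, B} : Set (Matrix (Fin N) (Fin N) ℂ)), x * y = y * x := by
    rintro x (rfl | rfl) y (rfl | rfl) <;> simp [hcomm]
  letI : CommRing (Algebra.adjoin ℂ ({A, B} : Set (Matrix (Fin N) (Fin N) ℂ))) :=
    Algebra.adjoinCommRingOfComm ℂ hc
  have hAmem : A ∈ Algebra.adjoin ℂ ({A, B} : Set (Matrix (Fin N) (Fin N) ℂ)) :=
    Algebra.subset_adjoin (by simp)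
  have hBmem : B ∈ Algebra.adjoin ℂ ({A, B} : Set (Matrix (Fin N) (Fin N) ℂ)) :=
    Algebra.subset_adjoin (by simp)
  -- a unit in the matrix algebra lying in the subalgebra is a unit of the subalgebra
  have unit_of : ∀ x : Algebra.adjoin ℂ ({A, B} : Set (Matrix (Fin N) (Fin N) ℂ)),
      IsUnit (x : Matrix (Fin N) (Fin N) ℂ) → IsUnit x := by
    intro x hx
    let L : Algebra.adjoin ℂ ({A, B} : Set (Matrix (Fin N) (Fin N) ℂ)) →ₗ[ℂ]
        Algebra.adjoin ℂ ({A, B} : Set (Matrix (Fin N) (Fin N) ℂ)) :=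
      { toFun := fun y => x * y
        map_add' := fun y z => mul_add x y z
        map_smul' := fun c y => by
          apply Subtype.ext
          simp only [Algebra.smul_def, Subalgebra.coe_mul, RingHom.id_apply]
          exact Algebra.left_comm ((x : Matrix (Fin N) (Fin N) ℂ)) c _ }
    have hinj : Function.Injective L := by
      intro y z hyz
      have h1 : (x : Matrix (Fin N) (Fin N) ℂ) * (y : Matrix (Fin N) (Fin N) ℂ)
          = (x : Matrix (Fin N) (Fin N) ℂ) * (z : Matrix (Fin N) (Fin N) ℂ) :=
        congrArg Subtype.val hyz
      exact Subtype.ext (hx.mul_left_cancel h1)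
    obtain ⟨y, hy⟩ := (LinearMap.injective_iff_surjective.mp hinj) 1
    exact IsUnit.of_mul_eq_one y hy
  set a : Algebra.adjoin ℂ ({A, B} : Set (Matrix (Fin N) (Fin N) ℂ)) := ⟨A, hAmem⟩ with hadef
  set b : Algebra.adjoin ℂ ({A, B} : Set (Matrix (Fin N) (Fin N) ℂ)) := ⟨B, hBmem⟩ with hbdef
  have hbμ : ¬ IsUnit (b - algebraMap ℂ _ μ) := by
    intro h
    have h2 := h.map (Algebra.adjoin ℂ ({A, B} : Set (Matrix (Fin N) (Fin N) ℂ))).val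
    rw [spectrum.mem_iff] at hμ
    apply hμ
    have h3 : ((Algebra.adjoin ℂ ({A, B} : Set (Matrix (Fin N) (Fin N) ℂ))).val)
        (b - algebraMap ℂ _ μ) = -(algebraMap ℂ (Matrix (Fin N) (Fin N) ℂ) μ - B) := by
      simp [hbdef]
    rw [h3] at h2
    simpa using h2.neg
  obtain ⟨φ, hφb⟩ := exists_char b μ hbμ
  have haunit : IsUnit a := unit_of a hA
  have hα : φ a ≠ 0 := (haunit.map φ).ne_zero
  have hμ0 : μ ≠ 0 := by
    rintro rfl
    rw [spectrum.zero_mem_iff] at hμ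
    exact hμ hB
  have hmem : ∀ k : ℕ, φ a * μ ^ k ∈ spectrum ℂ A := by
    intro k
    rw [← hspec k, spectrum.mem_iff]
    intro hu
    have h3 : (((algebraMap ℂ _ (φ a * μ ^ k) - a * b ^ k :
        Algebra.adjoin ℂ ({A, B} : Set (Matrix (Fin N) (Fin N) ℂ)))) :
        Matrix (Fin N) (Fin N) ℂ) = algebraMap ℂ (Matrix (Fin N) (Fin N) ℂ) (φ a * μ ^ k)
          - A * B ^ k := by
      push_cast
      simp [hadef, hbdef]
    have h4 := unit_of _ (h3 ▸ hu)
    have h5 := h4.map φ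
    simp only [map_sub, _root_.map_mul, map_pow, AlgHom.commutes, hφb, sub_self] at h5
    exact h5.ne_zero (by simp [Algebra.algebraMap_self_apply])
  haveI : Finite (spectrum ℂ A) := Set.finite_coe_iff.mpr (Matrix.finite_spectrum A)
  obtain ⟨i, j, hne, heq⟩ := Finite.exists_ne_map_eq_of_infinite
    (fun k : ℕ => (⟨φ a * μ ^ k, hmem k⟩ : spectrum ℂ A))
  have heq2 : μ ^ i = μ ^ j := by
    have := congrArg Subtype.val heq
    simpa using mul_left_cancel₀ hα this
  rcases hne.lt_or_gt with h | h
  · refine ⟨j - i, by omega, ?_⟩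
    have : μ ^ i * μ ^ (j - i) = μ ^ i * 1 := by
      rw [mul_one, ← pow_add]
      rw [heq2]; congr 1; omega
    exact mul_left_cancel₀ (pow_ne_zero i hμ0) this
  · refine ⟨i - j, by omega, ?_⟩
    have : μ ^ j * μ ^ (i - j) = μ ^ j * 1 := by
      rw [mul_one, ← pow_add]
      rw [← heq2]; congr 1; omega
    exact mul_left_cancel₀ (pow_ne_zero j hμ0) this

/- ### Elementary matrices in `SL_{n+3}(ℤ)` and their relations -/

/-- The elementary matrix `E_{1,2}(c)` as an element of `SL_{n+3}(ℤ)`. -/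
def Xsl (n : ℕ) (c : ℤ) : Matrix.SpecialLinearGroup (Fin (n+3)) ℤ :=
  ⟨transvection 0 1 c, Matrix.det_transvection_of_ne 0 1 (by simp [Fin.ext_iff]) c⟩

/-- The elementary matrix `E_{1,3}(c)` as an element of `SL_{n+3}(ℤ)`. -/
def Zsl (n : ℕ) (c : ℤ) : Matrix.SpecialLinearGroup (Fin (n+3)) ℤ :=
  ⟨transvection 0 2 c, Matrix.det_transvection_of_ne 0 2 (by simp [Fin.ext_iff, Nat.mod_eq_of_lt (show 2 < n + 3 by omega)]) c⟩

/-- The elementary matrix `E_{3,2}(c)` as an element of `SL_{n+3}(ℤ)`. -/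
def Tsl (n : ℕ) (c : ℤ) : Matrix.SpecialLinearGroup (Fin (n+3)) ℤ :=
  ⟨transvection 2 1 c, Matrix.det_transvection_of_ne 2 1 (by simp [Fin.ext_iff, Nat.mod_eq_of_lt (show 2 < n + 3 by omega)]) c⟩

lemma Xsl_mul (n : ℕ) (c d : ℤ) : Xsl n c * Xsl n d = Xsl n (c + d) :=
  Subtype.ext (by
    simp only [Xsl, Matrix.SpecialLinearGroup.coe_mul]
    exact transvection_mul_transvection_same (i := (0 : Fin (n+3))) (j := 1)
      (by simp [Fin.ext_iff]) c d)

lemma Xsl_pow (n : ℕ) (k : ℕ) : (Xsl n 1) ^ k = Xsl n (k : ℤ) := by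
  induction k with
  | zero =>
    apply Subtype.ext
    simp [Xsl]
    rfl
  | succ k ih =>
    rw [pow_succ, ih, Xsl_mul]
    norm_num

lemma ZX_comm (n : ℕ) : Zsl n 1 * Xsl n 1 = Xsl n 1 * Zsl n 1 :=
  Subtype.ext (by
    simp only [Matrix.SpecialLinearGroup.coe_mul]
    simp only [Zsl, Xsl, Matrix.SpecialLinearGroup.coe_mul]
    simp [transvection, mul_add, add_mul, Matrix.single_mul_single_of_ne, Fin.ext_iff, Nat.mod_eq_of_lt (show 2 < n + 3 by omega), Nat.mod_eq_of_lt (show 1 < n + 3 by omega)]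
    abel)

lemma T_conj (n : ℕ) (k : ℤ) : Tsl n (-k) * Zsl n 1 * Tsl n k = Zsl n 1 * Xsl n k :=
  Subtype.ext (by
    simp only [Matrix.SpecialLinearGroup.coe_mul]
    simp only [Tsl, Zsl, Xsl, Matrix.SpecialLinearGroup.coe_mul]
    have h : (single 2 1 (-k) : Matrix (Fin (n+3)) (Fin (n+3)) ℤ)
        = - single 2 1 k := by
      ext i j; simp [Matrix.single, Matrix.neg_apply]; split <;> simp
    simp [transvection, mul_add, add_mul, Matrix.single_mul_single_of_ne, Fin.ext_iff,
      Matrix.single_mul_single_same, h, Nat.mod_eq_of_lt (show 2 < n + 3 by omega), Nat.mod_eq_of_lt (show 1 < n + 3 by omega)]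
    abel)

lemma T_mul_inv (n : ℕ) (k : ℤ) : Tsl n (-k) * Tsl n k = 1 :=
  Subtype.ext (by
    simp only [Matrix.SpecialLinearGroup.coe_mul]
    simp only [Tsl, Matrix.SpecialLinearGroup.coe_mul]
    rw [transvection_mul_transvection_same (i := (2 : Fin (n+3))) (j := 1)
      (by simp [Fin.ext_iff, Nat.mod_eq_of_lt (show 2 < n + 3 by omega), Nat.mod_eq_of_lt (show 1 < n + 3 by omega)]) (-k) k]
    simp [Matrix.SpecialLinearGroup.coe_one])

/- ### Statement from the problem -/

/-- For `n ≥ 3`, every eigenvalue of the image of the elementary matrix `E_{1,2}`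
under any finite-dimensional complex representation of `SL_n(ℤ)` is a root of unity. -/
theorem eigenvalue_of_elementary_isRootOfUnity (n N : ℕ)
    (ρ : Matrix.SpecialLinearGroup (Fin (n + 3)) ℤ →* GL (Fin N) ℂ)
    (μ : ℂ) (hμ : μ ∈ spectrum ℂ ((ρ (Emat n ℤ) : Matrix (Fin N) (Fin N) ℂ))) :
    ∃ m : ℕ, 0 < m ∧ μ ^ m = 1 := by
  have hE : Emat n ℤ = Xsl n 1 := rfl
  rw [hE] at hμ
  refine key_spectral ((ρ (Zsl n 1) : Matrix (Fin N) (Fin N) ℂ))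
    ((ρ (Xsl n 1) : Matrix (Fin N) (Fin N) ℂ)) (ρ (Zsl n 1)).isUnit (ρ (Xsl n 1)).isUnit
    ?_ μ hμ ?_
  · -- commutation
    rw [← Units.val_mul, ← Units.val_mul, ← _root_.map_mul, ← _root_.map_mul, ZX_comm]
  · intro k
    have h1 : ((ρ (Xsl n 1) : Matrix (Fin N) (Fin N) ℂ)) ^ k
        = ((ρ (Xsl n (k : ℤ)) : Matrix (Fin N) (Fin N) ℂ)) := by
      rw [← Units.val_pow_eq_pow_val, ← map_pow, Xsl_pow]
    rw [h1, ← Units.val_mul, ← _root_.map_mul, ← T_conj, _root_.map_mul, _root_.map_mul]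
    have h2 : ρ (Tsl n (-(k : ℤ))) = (ρ (Tsl n (k : ℤ)))⁻¹ := by
      apply eq_inv_of_mul_eq_one_left
      rw [← _root_.map_mul, T_mul_inv, _root_.map_one]
    rw [h2, Units.val_mul, Units.val_mul]
    exact spectrum.units_conjugate' (u := ρ (Tsl n (k : ℤ)))
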